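/- If p is an odd prime with p ≡ 2 or 3 (mod 5), then the period k(p) of the Fibonacci sequence modulo p divides 2(p + 1). -/

import Mathlib

open Polynomial

lemma zmod5_not_sq_two : ¬ IsSquare ((2 : ℕ) : ZMod 5) := by decide

lemma zmod5_not_sq_three : ¬ IsSquare ((3 : ℕ) : ZMod 5) := by decide

theorem fib_period_dvd_two_p_add_one (p : ℕ) (hp : p.Prime) (hodd : Odd p)
    (h5 : p % 5 = 2 ∨ p % 5 = 3) (k : ℕ)
    (hk : IsLeast {i : ℕ | 0 < i ∧ Nat.fib i ≡ 0 [MOD p] ∧ Nat.fib (i + 1) ≡ 1 [MOD p]} k) :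
    k ∣ 2 * (p + 1) := by
  haveI : Fact p.Prime := ⟨hp⟩
  haveI : Fact (Nat.Prime 5) := ⟨by norm_num⟩
  have hp2 : p ≠ 2 := by rintro rfl; exact absurd hodd (by decide)
  -- 5 is not a square mod p
  have hnotsq : ¬ IsSquare (5 : ZMod p) := by
    have h := (ZMod.exists_sq_eq_prime_iff_of_mod_four_eq_one (p := 5) (q := p)
      (by norm_num) hp2).symm
    intro hsq
    have h5p : ((5 : ℕ) : ZMod p) = (5 : ZMod p) := by push_cast; ring
    rw [h5p] at h
    have hps : IsSquare ((p : ℕ) : ZMod 5) := h.mp hsq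
    rw [← ZMod.natCast_mod] at hps
    rcases h5 with h' | h' <;> rw [h'] at hps
    · exact zmod5_not_sq_two hps
    · exact zmod5_not_sq_three hps
  -- the polynomial X^2 - X - 1
  set f : (ZMod p)[X] := X ^ 2 - X - 1 with hf
  have hdegf : f.degree = 2 := by rw [hf]; compute_degree!
  have hndegf : f.natDegree = 2 := by rw [hf]; compute_degree!
  have hnoroot : ∀ c : ZMod p, ¬ f.IsRoot c := by
    intro c hc
    apply hnotsq
    refine ⟨2 * c - 1, ?_⟩
    have hcc : c ^ 2 - c - 1 = 0 := by simpa [hf, IsRoot] using hc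
    ring_nf
    linear_combination (-4 : ZMod p) * hcc
  have hirr : Irreducible f := by
    rw [Polynomial.irreducible_iff_roots_eq_zero_of_degree_le_three (by omega) (by omega)]
    rw [Multiset.eq_zero_iff_forall_notMem]
    intro a ha
    rw [mem_roots'] at ha
    exact hnoroot a ha.2
  haveI : Fact (Irreducible f) := ⟨hirr⟩
  set R := AdjoinRoot f with hR
  set φ : R := AdjoinRoot.root f with hφdef
  set A : ZMod p →+* R := algebraMap (ZMod p) R with hA
  have hAinj : Function.Injective A := A.injective
  haveI : CharP R p := charP_of_injective_algebraMap hAinj p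
  -- φ² = φ + 1
  have hφ : φ ^ 2 = φ + 1 := by
    have h0 : AdjoinRoot.mk f (X ^ 2 - X - 1) = 0 := by
      rw [← hf]; exact AdjoinRoot.mk_self
    simp only [map_sub, map_pow, map_one, AdjoinRoot.mk_X] at h0
    rw [sub_sub, sub_eq_zero] at h0
    exact h0
  -- linear independence of 1, φ
  have hind : ∀ a b : ZMod p, A a * φ + A b = 0 → a = 0 ∧ b = 0 := by
    intro a b h
    have hmk : AdjoinRoot.mk f (C a * X + C b) = 0 := by
      rw [map_add, map_mul, AdjoinRoot.mk_C, AdjoinRoot.mk_C, AdjoinRoot.mk_X]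
      rw [hA, AdjoinRoot.algebraMap_eq] at h
      exact h
    rw [AdjoinRoot.mk_eq_zero] at hmk
    have hz : C a * X + C b = 0 := by
      refine Polynomial.eq_zero_of_dvd_of_degree_lt hmk ?_
      rw [hdegf]
      have hle : (C a * X + C b).degree ≤ 1 := by compute_degree
      exact lt_of_le_of_lt hle (by norm_num)
    constructor
    · have h1 := congrArg (fun q => Polynomial.coeff q 1) hz
      simpa using h1
    · have h0 := congrArg (fun q => Polynomial.coeff q 0) hz
      simpa using h0
  have hind2 : ∀ a b a' b' : ZMod p, A a * φ + A b = A a' * φ + A b' → a = a' ∧ b = b' := by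
    intro a b a' b' h
    have h' : A (a - a') * φ + A (b - b') = 0 := by
      rw [map_sub, map_sub]; linear_combination h
    obtain ⟨h1, h2⟩ := hind _ _ h'
    exact ⟨sub_eq_zero.mp h1, sub_eq_zero.mp h2⟩
  -- Fibonacci powers
  have hpow : ∀ n : ℕ, φ ^ (n + 1)
      = A (Nat.fib (n + 1) : ZMod p) * φ + A (Nat.fib n : ZMod p) := by
    intro n
    induction n with
    | zero => simp
    | succ m ih =>
      rw [pow_succ, ih, Nat.fib_add_two]
      push_cast
      rw [map_add]
      linear_combination (A ((Nat.fib (m + 1) : ℕ) : ZMod p)) * hφ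
  -- the key equivalence
  have hS : ∀ i : ℕ, 0 < i → (φ ^ i = 1 ↔
      (Nat.fib i ≡ 0 [MOD p] ∧ Nat.fib (i + 1) ≡ 1 [MOD p])) := by
    intro i hi
    obtain ⟨n, rfl⟩ : ∃ n, i = n + 1 := ⟨i - 1, by omega⟩
    have hidx : n + 1 + 1 = n + 2 := by omega
    have hone : (1 : R) = A (0 : ZMod p) * φ + A (1 : ZMod p) := by simp
    constructor
    · intro hp1
      rw [hpow n, hone] at hp1
      obtain ⟨h1, h2⟩ := hind2 _ _ _ _ hp1
      have hfib2 : ((Nat.fib (n + 2) : ℕ) : ZMod p) = ((1 : ℕ) : ZMod p) := by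
        rw [Nat.fib_add_two]; push_cast; rw [h1, h2]; ring
      refine ⟨?_, ?_⟩
      · have h1' : ((Nat.fib (n + 1) : ℕ) : ZMod p) = ((0 : ℕ) : ZMod p) := by
          push_cast; exact h1
        exact (ZMod.natCast_eq_natCast_iff _ _ _).mp h1'
      · rw [hidx]
        exact (ZMod.natCast_eq_natCast_iff _ _ _).mp hfib2
    · rintro ⟨h1, h2⟩
      rw [hidx] at h2
      have h1' : ((Nat.fib (n + 1) : ℕ) : ZMod p) = 0 := by
        have h := (ZMod.natCast_eq_natCast_iff _ _ _).mpr h1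
        push_cast at h; exact h
      have h2' : ((Nat.fib (n + 2) : ℕ) : ZMod p) = 1 := by
        have h := (ZMod.natCast_eq_natCast_iff _ _ _).mpr h2
        push_cast at h; exact h
      have h3 : ((Nat.fib n : ℕ) : ZMod p) = 1 := by
        have hfa : ((Nat.fib (n + 2) : ℕ) : ZMod p)
            = (Nat.fib (n + 1) : ZMod p) + (Nat.fib n : ZMod p) := by
          rw [Nat.fib_add_two]; push_cast; ring
        rw [h2', h1', zero_add] at hfa
        exact hfa.symm
      rw [hpow n, h1', h3]
      simp
  -- Frobenius: φ^p is the other root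
  have hfrob : (φ ^ p) ^ 2 = φ ^ p + 1 := by
    have h := congrArg (fun x : R => x ^ p) hφ
    simp only [← pow_mul] at h
    rw [mul_comm 2 p, pow_mul, add_pow_char, one_pow] at h
    exact h
  have hcases : φ ^ p = φ ∨ φ ^ p = 1 - φ := by
    have hmul : (φ ^ p - φ) * (φ ^ p - (1 - φ)) = 0 := by
      linear_combination hfrob - hφ
    rcases mul_eq_zero.mp hmul with h | h
    · exact Or.inl (sub_eq_zero.mp h)
    · exact Or.inr (sub_eq_zero.mp h)
  have hne : φ ^ p ≠ φ := by
    intro hfix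
    set g : R[X] := X ^ p - X with hg
    have hg0 : g ≠ 0 := FiniteField.X_pow_card_sub_X_ne_zero R hp.one_lt
    have hgdeg : g.natDegree = p := FiniteField.X_pow_card_sub_X_natDegree_eq R hp.one_lt
    have hnotim : φ ∉ Finset.univ.image A := by
      intro hmem
      obtain ⟨c, _, hc⟩ := Finset.mem_image.mp hmem
      apply hnoroot c
      have : A (c ^ 2) = A (c + 1) := by
        rw [map_pow, map_add, map_one, hc, hφ]
      have hcc : c ^ 2 = c + 1 := hAinj this
      simp [hf, IsRoot]
      linear_combination hcc
    have hsub : insert φ (Finset.univ.image A) ⊆ g.roots.toFinset := by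
      intro x hx
      rw [Multiset.mem_toFinset, mem_roots hg0]
      rcases Finset.mem_insert.mp hx with rfl | hx
      · simp [hg, IsRoot, hfix]
      · obtain ⟨c, _, hc⟩ := Finset.mem_image.mp hx
        subst hc
        simp [hg, IsRoot, ← map_pow, ZMod.pow_card]
    have hcard1 : (insert φ (Finset.univ.image A)).card = p + 1 := by
      rw [Finset.card_insert_of_notMem hnotim,
        Finset.card_image_of_injective _ hAinj, Finset.card_univ, ZMod.card]
    have hcard2 : g.roots.toFinset.card ≤ p := by
      calc g.roots.toFinset.card ≤ Multiset.card g.roots := g.roots.toFinset_card_le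
      _ ≤ g.natDegree := Polynomial.card_roots' g
      _ = p := hgdeg
    have := Finset.card_le_card hsub
    omega
  have hpp : φ ^ (p + 1) = -1 := by
    have h1 : φ ^ p = 1 - φ := hcases.resolve_left hne
    rw [pow_succ, h1]
    linear_combination -hφ
  have horder : φ ^ (2 * (p + 1)) = 1 := by
    rw [mul_comm, pow_mul, hpp]; ring
  -- k is the order of φ
  have hfin : IsOfFinOrder φ :=
    isOfFinOrder_iff_pow_eq_one.mpr ⟨2 * (p + 1), by positivity, horder⟩
  have hd0 : 0 < orderOf φ := hfin.orderOf_pos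
  have hkd : k ≤ orderOf φ := hk.2 ⟨hd0, (hS _ hd0).mp (pow_orderOf_eq_one φ)⟩
  obtain ⟨hk0, hkfib⟩ := hk.1
  have hφk : φ ^ k = 1 := (hS k hk0).mpr hkfib
  have hdk : orderOf φ ∣ k := orderOf_dvd_of_pow_eq_one hφk
  have hdkeq : orderOf φ = k := le_antisymm (Nat.le_of_dvd hk0 hdk) hkd
  rw [← hdkeq]
  exact orderOf_dvd_of_pow_eq_one horder
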